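/- Let Γ be a finite graph and let x, y ∈ A(Γ) be of the form x = (a^k)^g and y = (b^m)^h with a, b ∈ V(Γ), k, m nonzero integers, and g, h ∈ A(Γ). Define x* = a^g and y* = b^h. Then [x, y] = 1 if and only if [x*, y*] = 1. -/

import Mathlib

open scoped commutatorElement

/-- The set of commutator relations of a right-angled Artin group on a graph. -/
def raagRels {α : Type*} (Γ : SimpleGraph α) : Set (FreeGroup α) :=
  {r | ∃ u v : α, Γ.Adj u v ∧ r = ⁅FreeGroup.of u, FreeGroup.of v⁆}

/-- The right-angled Artin group on the graph `Γ`. -/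
def Raag {α : Type*} (Γ : SimpleGraph α) : Type _ := PresentedGroup (raagRels Γ)

instance {α : Type*} (Γ : SimpleGraph α) : Group (Raag Γ) :=
  inferInstanceAs (Group (PresentedGroup (raagRels Γ)))

/-- The standard generator of `Raag Γ` corresponding to a vertex. -/
def Raag.of {α : Type*} (Γ : SimpleGraph α) (v : α) : Raag Γ := PresentedGroup.of v

/-- The commutation graph of a subset `X` of a group `G`. -/
def commGraph (G : Type*) [Group G] (X : Set G) : SimpleGraph X where
  Adj x y := x ≠ y ∧ Commute x.1 y.1
  symm := ⟨fun _ _ ⟨h1, h2⟩ => ⟨h1.symm, h2.symm⟩⟩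
  loopless := ⟨fun _ ⟨h1, _⟩ => h1 rfl⟩

/-- The natural homomorphism `A(CG(X)) → G` extending the identity on `X`. -/
def natHom (G : Type*) [Group G] (X : Set G) : Raag (commGraph G X) →* G :=
  PresentedGroup.toGroup (f := Subtype.val) (by
    rintro r ⟨u, v, hadj, rfl⟩
    rw [map_commutatorElement]
    simp only [FreeGroup.lift_apply_of]
    exact commutatorElement_eq_one_iff_commute.mpr hadj.2)

/-- The star of a vertex: vertices equal or adjacent to `v`. -/
def starSet {α : Type*} (Γ : SimpleGraph α) (v : α) : Set α := {w | w = v ∨ Γ.Adj v w}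

/-- The link of a vertex: vertices adjacent to `v`. -/
def linkSet {α : Type*} (Γ : SimpleGraph α) (v : α) : Set α := {w | Γ.Adj v w}

/-- The double of a graph `X` along the star of a vertex `v`:
two copies of the complement of the star, glued along the star. -/
def doubleStar {α : Type*} (X : SimpleGraph α) (v : α) :
    SimpleGraph ((Fin 2 × {w : α // w ∉ starSet X v}) ⊕ {w : α // w ∈ starSet X v}) where
  Adj a b :=
    match a, b with
    | .inl (i, x), .inl (j, y) => i = j ∧ X.Adj x.1 y.1
    | .inl (_, x), .inr y => X.Adj x.1 y.1
    | .inr x, .inl (_, y) => X.Adj x.1 y.1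
    | .inr x, .inr y => X.Adj x.1 y.1
  symm := by
    refine ⟨?_⟩
    rintro (⟨i, x⟩ | x) (⟨j, y⟩ | y) h
    · exact ⟨h.1.symm, h.2.symm⟩
    · exact h.symm
    · exact h.symm
    · exact h.symm
  loopless := by
    refine ⟨?_⟩
    rintro (⟨i, x⟩ | x) h
    · exact X.loopless.irrefl _ h.2
    · exact X.loopless.irrefl _ h

/-- The group element represented by a word (a list of letters with signs). -/
def wprod {α : Type*} (Γ : SimpleGraph α) (l : List (α × Bool)) : Raag Γ :=
  (l.map fun p => if p.2 then Raag.of Γ p.1 else (Raag.of Γ p.1)⁻¹).prod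

/-- The word length of an element of `Raag Γ` with respect to the vertex generators. -/
noncomputable def wordLength {α : Type*} (Γ : SimpleGraph α) (w : Raag Γ) : ℕ :=
  sInf {n | ∃ l : List (α × Bool), l.length = n ∧ wprod Γ l = w}

/-- A word is reduced if its length realizes the word length of the element it represents. -/
def WordReduced {α : Type*} (Γ : SimpleGraph α) (l : List (α × Bool)) : Prop :=
  l.length = wordLength Γ (wprod Γ l)

/-- The right-counting vector of a word: `rcv Γ l i` is the minimal word length of `y`
such that the suffix of `l` from position `i` equals `x * sᵢ^{eᵢ} * y` with `x` in the
subgroup generated by the link of `sᵢ`. -/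
noncomputable def rcv {α : Type*} (Γ : SimpleGraph α) (l : List (α × Bool))
    (i : Fin l.length) : ℕ :=
  sInf {m | ∃ x y : Raag Γ,
    x ∈ Subgroup.closure (Raag.of Γ '' linkSet Γ (l.get i).1) ∧
    wordLength Γ y = m ∧
    wprod Γ (l.drop i) = x * wprod Γ [l.get i] * y}

/-- The exponent used by the inflating map `σ` at position `i` of the word `l`. -/
noncomputable def sigmaExp {α : Type*} (Γ : SimpleGraph α) (M : ℕ) (l : List (α × Bool))
    (i : Fin l.length) : ℤ :=
  if (l.get i).2 then (4 : ℤ) ^ (M - 1 - rcv Γ l i)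
  else -2 * (4 : ℤ) ^ (M - 1 - rcv Γ l i)

/-- The inflating map `σ` applied to a word `l`, as an element of `Raag Γ`. -/
noncomputable def sigmaProd {α : Type*} (Γ : SimpleGraph α) (M : ℕ)
    (l : List (α × Bool)) : Raag Γ :=
  (List.ofFn fun i : Fin l.length => (Raag.of Γ (l.get i).1) ^ (sigmaExp Γ M l i)).prod

open Monoid Function

namespace PushoutKey

variable {ι : Type*} {G : ι → Type*} [∀ i, Group (G i)] {H : Type*} [Group H]
  (φ : ∀ i, H →* G i)

/-- product of a raw list of letters in the pushout -/
def lprod (l : List (Σ i, G i)) : PushoutI φ :=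
  (l.map fun p => PushoutI.of (φ := φ) p.1 p.2).prod

@[simp] lemma lprod_nil : lprod φ ([] : List (Σ i, G i)) = 1 := rfl

@[simp] lemma lprod_cons (p : (Σ i, G i)) (l : List (Σ i, G i)) :
    lprod φ (p :: l) = PushoutI.of (φ := φ) p.1 p.2 * lprod φ l := by
  simp [lprod]

@[simp] lemma lprod_append (l₁ l₂ : List (Σ i, G i)) :
    lprod φ (l₁ ++ l₂) = lprod φ l₁ * lprod φ l₂ := by
  simp [lprod]

lemma lprod_revinv (l : List (Σ i, G i)) :
    lprod φ (l.reverse.map fun p => ⟨p.1, p.2⁻¹⟩) = (lprod φ l)⁻¹ := by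
  induction l with
  | nil => simp
  | cons p t ih =>
    rw [List.reverse_cons, List.map_append, lprod_append, List.map_reverse] at *
    simp [ih]

variable {φ} (hφ : ∀ i, Injective (φ i)) {j : ι} {b : G j}

/-- Key combinatorial lemma: a reduced word commuting with a central non-amalgamated
letter `b` of the factor `G j` has all its letters in `G j`. -/
lemma core (hφ : ∀ i, Injective (φ i)) (hbr : b ∉ (φ j).range)
    (hbc : ∀ x : G j, Commute x b) :
    ∀ (n : ℕ) (l : List (Σ i, G i)), l.length ≤ n →
    l.IsChain (fun p q => p.1 ≠ q.1) →
    (∀ p ∈ l, p.2 ∉ (φ p.1).range) →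
    Commute (lprod φ l) (PushoutI.of (φ := φ) j b) →
    ∀ p ∈ l, p.1 = j := by
  intro n
  induction n with
  | zero =>
    intro l hl _ _ _ p hp
    rw [Nat.le_zero, List.length_eq_zero_iff] at hl
    subst hl; simp at hp
  | succ n ih =>
    rintro l hlen hchain hred hcomm p hp
    obtain _ | ⟨⟨i, x⟩, t⟩ := l
    · simp at hp
    by_cases hij : i = j
    · -- strip the leading letter, which is in `G j`
      subst hij
      have hcx : Commute (PushoutI.of (φ := φ) i x) (PushoutI.of (φ := φ) i b) :=
        (hbc x).map _
      have hcomm' : Commute (lprod φ t) (PushoutI.of (φ := φ) i b) := by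
        have h2 := (hcx.inv_left).mul_left (by simpa using hcomm)
        simpa [mul_assoc] using h2
      have ht : ∀ q ∈ t, q.1 = i :=
        ih t (by simpa using Nat.le_of_succ_le_succ hlen) hchain.tail
          (fun q hq => hred q (List.mem_cons_of_mem _ hq)) hcomm'
      rcases List.mem_cons.mp hp with rfl | hp'
      · rfl
      · exact ht p hp'
    · exfalso
      obtain ⟨s, q, heq⟩ : ∃ s q, (⟨i, x⟩ :: t : List (Σ i, G i)) = s ++ [q] := by
        obtain ⟨s, q, heq⟩ := (List.eq_nil_or_concat (⟨i, x⟩ :: t :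
          List (Σ i, G i))).resolve_left (by simp)
        exact ⟨s, q, by simpa [List.concat_eq_append] using heq⟩
      by_cases hqj : q.1 = j
      · -- strip the trailing letter
        obtain ⟨qi, qy⟩ := q
        dsimp at hqj
        replace hqj := hqj.symm
        subst hqj
        have hcq : Commute (PushoutI.of (φ := φ) j qy) (PushoutI.of (φ := φ) j b) :=
          (hbc qy).map _
        have hcomm2 : Commute (lprod φ s * PushoutI.of (φ := φ) j qy)
            (PushoutI.of (φ := φ) j b) := by
          have h' := hcomm
          rw [heq] at h'
          simpa using h'
        have hcomm' : Commute (lprod φ s) (PushoutI.of (φ := φ) j b) := by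
          have h2 := hcomm2.mul_left hcq.inv_left
          simpa [mul_assoc] using h2
        have hslen : s.length ≤ n := by
          have h1 : (⟨i, x⟩ :: t : List (Σ i, G i)).length = s.length + 1 := by
            rw [heq]; simp
          have h2 := hlen
          simp only [List.length_cons] at h1 h2
          omega
        have hs : ∀ r ∈ s, r.1 = j := by
          refine ih s hslen ?_ ?_ hcomm'
          · have hc2 := heq ▸ hchain
            exact (List.isChain_append.mp hc2).1
          · intro r hr
            exact hred r (by rw [heq]; exact List.mem_append_left _ hr)
        cases s with
        | nil =>
          simp only [List.nil_append] at heq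
          have : i = j := congrArg Sigma.fst (List.cons_eq_cons.mp heq).1
          exact hij this
        | cons s0 s' =>
          have h0 : s0 = ⟨i, x⟩ := ((List.cons_eq_cons.mp heq).1).symm
          have : s0.1 = j := hs s0 List.mem_cons_self
          rw [h0] at this
          exact hij this
      · -- genuinely reduced conjugation word: contradiction with normal form theory
        set u : List (Σ i, G i) :=
          (⟨i, x⟩ :: t) ++ ⟨j, b⟩ ::
            (((⟨i, x⟩ :: t : List (Σ i, G i)).reverse.map
              fun p => (⟨p.1, p.2⁻¹⟩ : Σ i, G i)) ++ [⟨j, b⁻¹⟩])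
          with hu
        have humem : ∀ r ∈ u, r.2 ∉ (φ r.1).range := by
          intro r hr
          rw [hu] at hr
          simp only [List.mem_append, List.mem_cons, List.mem_singleton, List.mem_map,
            List.mem_reverse] at hr
          rcases hr with hr | rfl | ⟨r', hr', rfl⟩ | rfl | h0
          · exact hred r (List.mem_cons.mpr hr)
          · exact hbr
          · simpa using hred r' (List.mem_cons.mpr hr')
          · simpa using hbr
          · exact absurd h0 List.not_mem_nil
        have hune : ∀ r ∈ u, r.2 ≠ (1 : G r.1) := by
          intro r hr h1
          exact humem r hr (h1 ▸ Subgroup.one_mem _)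
        have hrev : (⟨i, x⟩ :: t : List (Σ i, G i)).reverse = q :: s.reverse := by
          rw [heq]; simp
        have huchain : u.IsChain (fun p q => p.1 ≠ q.1) := by
          rw [hu, List.isChain_append]
          refine ⟨hchain, ?_, ?_⟩
          · rw [List.isChain_cons]
            constructor
            · intro y hy
              rw [List.head?_append, hrev] at hy
              simp only [List.map_cons, List.head?_cons, Option.or_some,
                Option.mem_some_iff] at hy
              subst hy
              exact fun hc => hqj hc.symm
            · rw [List.isChain_append]
              refine ⟨?_, by simp, ?_⟩
              · rw [List.isChain_map, List.isChain_reverse]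
                exact hchain.imp (fun a b h => by exact fun h' => h h'.symm)
              · intro y hy z hz
                simp only [List.head?_cons, Option.mem_some_iff] at hz
                subst hz
                rw [List.getLast?_map, List.getLast?_reverse] at hy
                simp only [List.head?_cons, Option.map_some, Option.mem_some_iff] at hy
                subst hy
                exact hij
          · intro y hy z hz
            simp only [List.head?_cons, Option.mem_some_iff] at hz
            subst hz
            rw [heq, List.getLast?_concat] at hy
            simp only [Option.mem_some_iff] at hy
            subst hy
            exact hqj
        let w : CoprodI.Word G := ⟨u, fun r hr => hune r hr, huchain⟩
        have hwred : PushoutI.Reduced φ w := fun r hr => humem r hr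
        have hprod : PushoutI.ofCoprodI (φ := φ) w.prod = lprod φ u := by
          show PushoutI.ofCoprodI (φ := φ) (CoprodI.Word.prod ⟨u, _, _⟩) = lprod φ u
          rw [CoprodI.Word.prod, map_list_prod, List.map_map]
          refine congrArg _ (List.map_congr_left fun r _ => ?_)
          simp [Function.comp]
        have key : ∀ (l : List (Σ i, G i)),
            Commute (lprod φ l) (PushoutI.of (φ := φ) j b) →
            lprod φ (l ++ ⟨j, b⟩ :: ((l.reverse.map
              fun p => (⟨p.1, p.2⁻¹⟩ : Σ i, G i)) ++ [⟨j, b⁻¹⟩])) = 1 := by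
          intro l hl
          rw [lprod_append, lprod_cons, lprod_append, lprod_revinv]
          simp only [lprod_cons, lprod_nil, mul_one, map_inv]
          rw [← mul_assoc, hl.eq]
          group
        have hu1 : lprod φ u = 1 := by rw [hu]; exact key _ hcomm
        have hmem : PushoutI.ofCoprodI (φ := φ) w.prod ∈ (PushoutI.base φ).range := by
          rw [hprod, hu1]; exact Subgroup.one_mem _
        have hempty := hwred.eq_empty_of_mem_range hφ hmem
        have h0 : u = [] := congrArg CoprodI.Word.toList hempty
        rw [hu] at h0
        simp at h0

lemma ofCoprodI_word_prod (w : CoprodI.Word G) :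
    PushoutI.ofCoprodI (φ := φ) w.prod = lprod φ w.toList := by
  rw [CoprodI.Word.prod, map_list_prod, List.map_map]
  exact congrArg _ (List.map_congr_left fun r _ => by simp [Function.comp])

lemma not_mem_range_of_transversal {d : PushoutI.NormalWord.Transversal φ}
    {i : ι} {y : G i} (hset : y ∈ d.set i) (hne : y ≠ 1) : y ∉ (φ i).range := by
  rintro ⟨z, hz⟩
  have hco := d.compl i
  have h1 : ((⟨⟨y, ⟨z, hz⟩⟩, ⟨1, d.one_mem i⟩⟩ :
        ((φ i).range : Set (G i)) × (d.set i)) =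
      ⟨⟨1, Subgroup.one_mem _⟩, ⟨y, hset⟩⟩) :=
    hco.injective (by simp)
  have h2 := congrArg (fun p => (p.2 : G i)) h1
  exact hne (by simpa using h2.symm)

/-- If `g` commutes with `of j b` where `b` is central in `G j` and not in the amalgamated
subgroup, then `g` is in the image of `G j`. -/
lemma mem_range_of_commute (hφ : ∀ i, Injective (φ i)) (hbr : b ∉ (φ j).range)
    (hbc : ∀ x : G j, Commute x b) (g : PushoutI φ)
    (hg : Commute g (PushoutI.of (φ := φ) j b)) :
    g ∈ (PushoutI.of (φ := φ) j).range := by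
  letI := Classical.decEq ι
  letI := fun i => Classical.decEq (G i)
  obtain ⟨d⟩ := PushoutI.NormalWord.transversal_nonempty φ hφ
  obtain ⟨w, hgw⟩ : ∃ w : PushoutI.NormalWord d, w.prod = g :=
    ⟨PushoutI.NormalWord.equiv (φ := φ) (d := d) g,
      (PushoutI.NormalWord.equiv (φ := φ) (d := d)).symm_apply_apply g⟩
  have hC : g = PushoutI.base φ w.head * lprod φ w.toWord.toList := by
    conv_lhs => rw [← hgw]
    have : w.prod = PushoutI.base φ w.head * PushoutI.ofCoprodI w.toWord.prod := rfl
    rw [this, ofCoprodI_word_prod]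
  have hB : ∀ r : (Σ i, G i), r ∈ w.toWord.toList → r.2 ∉ (φ r.1).range := by
    rintro ⟨ri, ry⟩ hr
    exact not_mem_range_of_transversal (w.normalized ri ry hr)
      (w.toWord.ne_one _ hr)
  obtain ⟨l, hchain, hred, hgeq⟩ :
      ∃ l : List (Σ i, G i), l.IsChain (fun p q => p.1 ≠ q.1) ∧
        (∀ r ∈ l, r.2 ∉ (φ r.1).range) ∧
        g = PushoutI.base φ w.head * lprod φ l :=
    ⟨w.toWord.toList, w.toWord.chain_ne, hB, hC⟩
  have hbase : Commute (PushoutI.base φ w.head) (PushoutI.of (φ := φ) j b) := by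
    have h3 := (hbc (φ j w.head)).map (PushoutI.of (φ := φ) j)
    rwa [PushoutI.of_apply_eq_base] at h3
  have hcomml : Commute (lprod φ l) (PushoutI.of (φ := φ) j b) := by
    have h4 := (hbase.inv_left).mul_left hg
    rw [hgeq] at h4
    simpa [mul_assoc] using h4
  have hall := core hφ hbr hbc l.length l le_rfl hchain hred hcomml
  match l, hall, hgeq, hchain with
  | [], _, hgeq, _ =>
    refine ⟨φ j w.head, ?_⟩
    rw [PushoutI.of_apply_eq_base]
    simpa using hgeq.symm
  | [⟨i0, y⟩], hall, hgeq, _ =>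
    have hi0 : i0 = j := hall _ List.mem_cons_self
    subst hi0
    refine ⟨φ i0 w.head * y, ?_⟩
    rw [map_mul, PushoutI.of_apply_eq_base]
    simpa using hgeq.symm
  | (p :: q :: r), hall, _, hchain2 =>
    exact absurd ((hall p (by simp)).trans ((hall q (by simp)).symm))
      (List.isChain_cons_cons.mp hchain2).1

end PushoutKey

section RaagAux

open PushoutKey Monoid

variable {V : Type*} (Γ : SimpleGraph V)

lemma Raag.commute_of_adj {u v : V} (h : Γ.Adj u v) :
    Commute (Raag.of Γ u) (Raag.of Γ v) := by
  rw [← commutatorElement_eq_one_iff_commute]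
  have hmem : (⁅FreeGroup.of u, FreeGroup.of v⁆ : FreeGroup V) ∈
      Subgroup.normalClosure (raagRels Γ) :=
    Subgroup.subset_normalClosure ⟨u, v, h, rfl⟩
  have heq : (⁅Raag.of Γ u, Raag.of Γ v⁆ : Raag Γ) =
      PresentedGroup.mk (raagRels Γ) ⁅FreeGroup.of u, FreeGroup.of v⁆ :=
    (map_commutatorElement (PresentedGroup.mk (raagRels Γ)) _ _).symm
  rw [heq]
  exact (QuotientGroup.eq_one_iff _).mpr hmem

/-- Homomorphism out of a RAAG determined by images of generators that commute along edges. -/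
def raagHom {G : Type*} [Group G] (f : V → G)
    (hf : ∀ u v, Γ.Adj u v → Commute (f u) (f v)) : Raag Γ →* G :=
  PresentedGroup.toGroup (f := f) (by
    rintro r ⟨u, v, hadj, rfl⟩
    rw [map_commutatorElement]
    simp only [FreeGroup.lift_apply_of]
    exact commutatorElement_eq_one_iff_commute.mpr (hf u v hadj))

@[simp] lemma raagHom_of {G : Type*} [Group G] (f : V → G)
    (hf : ∀ u v, Γ.Adj u v → Commute (f u) (f v)) (v : V) :
    raagHom Γ f hf (Raag.of Γ v) = f v :=
  PresentedGroup.toGroup.of _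

lemma raagHom_ext {G : Type*} [Group G] {φ ψ : Raag Γ →* G}
    (h : ∀ v, φ (Raag.of Γ v) = ψ (Raag.of Γ v)) : φ = ψ :=
  PresentedGroup.ext h

lemma comp_eq_id_injective {A B : Type*} [Group A] [Group B] {φ : A →* B} {ρ : B →* A}
    (h : ρ.comp φ = MonoidHom.id A) : Function.Injective φ := by
  intro x y hxy
  have h1 := congrFun (congrArg (fun f => f.toFun) h) x
  have h2 := congrFun (congrArg (fun f => f.toFun) h) y
  simp only [MonoidHom.toFun_eq_coe, MonoidHom.coe_comp, Function.comp_apply,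
    MonoidHom.id_apply] at h1 h2
  have := congrArg ρ hxy
  rwa [h1, h2] at this

variable (a : V) [DecidableEq V] [DecidableRel Γ.Adj]

lemma link_ne (v : V) (hv : v ∈ linkSet Γ a) : v ≠ a :=
  fun h => Γ.loopless.irrefl a (h ▸ hv)

lemma induce_adj' {s : Set V} {u v : s} (h : (Γ.induce s).Adj u v) : Γ.Adj u.1 v.1 := h

/-- The two factors of the amalgam decomposition of a RAAG at the vertex `a` :
the RAAG on the complement of `a`, and the RAAG on the star of `a`. -/
def raagFac : Bool → Type _
  | false => Raag (Γ.induce {v | v ≠ a})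
  | true => Raag (Γ.induce (starSet Γ a))

instance raagFacGroup : ∀ i, Group (raagFac Γ a i)
  | false => inferInstanceAs (Group (Raag (Γ.induce {v | v ≠ a})))
  | true => inferInstanceAs (Group (Raag (Γ.induce (starSet Γ a))))

/-- amalgamating map into the complement factor -/
def raagAmalgF : Raag (Γ.induce (linkSet Γ a)) →* Raag (Γ.induce {v | v ≠ a}) :=
  raagHom _ (fun v => Raag.of (Γ.induce {v | v ≠ a}) ⟨v.1, link_ne Γ a v.1 v.2⟩)
    (fun u v h => Raag.commute_of_adj _ (induce_adj' Γ h))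

@[simp] lemma raagAmalgF_of (v : (linkSet Γ a)) :
    raagAmalgF Γ a (Raag.of _ v) =
      Raag.of (Γ.induce {v | v ≠ a}) ⟨v.1, link_ne Γ a v.1 v.2⟩ :=
  raagHom_of _ _ _ _

/-- amalgamating map into the star factor -/
def raagAmalgT : Raag (Γ.induce (linkSet Γ a)) →* Raag (Γ.induce (starSet Γ a)) :=
  raagHom _ (fun v => Raag.of (Γ.induce (starSet Γ a)) ⟨v.1, Or.inr v.2⟩)
    (fun u v h => Raag.commute_of_adj _ (induce_adj' Γ h))

@[simp] lemma raagAmalgT_of (v : (linkSet Γ a)) :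
    raagAmalgT Γ a (Raag.of _ v) =
      Raag.of (Γ.induce (starSet Γ a)) ⟨v.1, Or.inr v.2⟩ :=
  raagHom_of _ _ _ _

/-- The amalgamating maps from the RAAG on the link. -/
def raagAmalg : ∀ i : Bool, Raag (Γ.induce (linkSet Γ a)) →* raagFac Γ a i
  | false => raagAmalgF Γ a
  | true => raagAmalgT Γ a

/-- retraction of the complement factor onto the link RAAG -/
def raagRetrP : Raag (Γ.induce {v | v ≠ a}) →* Raag (Γ.induce (linkSet Γ a)) :=
  raagHom _ (fun v => if h : Γ.Adj a v.1 then Raag.of (Γ.induce (linkSet Γ a)) ⟨v.1, h⟩ else 1)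
    (by
      intro u v h
      by_cases hu : Γ.Adj a u.1 <;> by_cases hv : Γ.Adj a v.1 <;>
        simp only [dif_pos, dif_neg, hu, hv]
      · exact Raag.commute_of_adj _ (induce_adj' Γ h)
      all_goals simp [Commute.one_left, Commute.one_right])

/-- retraction of the star factor onto the link RAAG -/
def raagRetrS : Raag (Γ.induce (starSet Γ a)) →* Raag (Γ.induce (linkSet Γ a)) :=
  raagHom _ (fun v => if h : Γ.Adj a v.1 then Raag.of (Γ.induce (linkSet Γ a)) ⟨v.1, h⟩ else 1)
    (by
      intro u v h
      by_cases hu : Γ.Adj a u.1 <;> by_cases hv : Γ.Adj a v.1 <;>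
        simp only [dif_pos, dif_neg, hu, hv]
      · exact Raag.commute_of_adj _ (induce_adj' Γ h)
      all_goals simp [Commute.one_left, Commute.one_right])

lemma raagAmalg_injective : ∀ i, Function.Injective (raagAmalg Γ a i) := by
  intro i
  cases i
  · refine comp_eq_id_injective (ρ := raagRetrP Γ a) (raagHom_ext _ ?_)
    intro v
    simp only [MonoidHom.coe_comp, Function.comp_apply, MonoidHom.id_apply]
    show raagRetrP Γ a (raagAmalgF Γ a (Raag.of _ v)) = Raag.of _ v
    rw [raagAmalgF_of, raagRetrP, raagHom_of]
    exact dif_pos (v.2 : Γ.Adj a v.1)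
  · refine comp_eq_id_injective (ρ := raagRetrS Γ a) (raagHom_ext _ ?_)
    intro v
    simp only [MonoidHom.coe_comp, Function.comp_apply, MonoidHom.id_apply]
    show raagRetrS Γ a (raagAmalgT Γ a (Raag.of _ v)) = Raag.of _ v
    rw [raagAmalgT_of, raagRetrS, raagHom_of]
    exact dif_pos (v.2 : Γ.Adj a v.1)

/-- The generator of the star factor corresponding to `a` itself. -/
def genA : Raag (Γ.induce (starSet Γ a)) :=
  Raag.of (Γ.induce (starSet Γ a)) ⟨a, Or.inl rfl⟩

/-- `a` is central in the RAAG of its star. -/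
lemma genA_central (x : Raag (Γ.induce (starSet Γ a))) : Commute x (genA Γ a) := by
  have hx : x ∈ Subgroup.centralizer {genA Γ a} := by
    apply PresentedGroup.generated_by
    intro v
    apply Subgroup.mem_centralizer_iff.mpr
    rintro y rfl
    show genA Γ a * Raag.of _ v = Raag.of _ v * genA Γ a
    by_cases hv : v.1 = a
    · have hva : v = (⟨a, Or.inl rfl⟩ : {w // w ∈ starSet Γ a}) := Subtype.ext hv
      rw [show (Raag.of (Γ.induce (starSet Γ a)) v : Raag (Γ.induce (starSet Γ a)))
        = genA Γ a by rw [hva]; rfl]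
    · rcases v.2 with h | h
      · exact absurd h hv
      · exact ((Raag.commute_of_adj (Γ.induce (starSet Γ a))
          (u := ⟨a, Or.inl rfl⟩) (v := v) h).eq)
  have := Subgroup.mem_centralizer_iff.mp hx (genA Γ a) rfl
  exact Commute.symm this

/-- counting exponents of `a`: the retraction onto `ℤ` -/
def raagCount : Raag (Γ.induce (starSet Γ a)) →* Multiplicative ℤ :=
  raagHom _ (fun v => if v.1 = a then Multiplicative.ofAdd 1 else 1)
    (fun _ _ _ => Commute.all _ _)

@[simp] lemma raagCount_of (v : (starSet Γ a)) :
    raagCount Γ a (Raag.of _ v) = if v.1 = a then Multiplicative.ofAdd 1 else 1 :=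
  raagHom_of _ _ _ _

lemma genA_zpow_not_in_range (k : ℤ) (hk : k ≠ 0) :
    (genA Γ a) ^ k ∉ (raagAmalg Γ a true).range := by
  rintro ⟨y, hy⟩
  have hcomp : (raagCount Γ a).comp (raagAmalg Γ a true) = 1 := by
    apply raagHom_ext
    intro v
    simp only [MonoidHom.coe_comp, Function.comp_apply, MonoidHom.one_apply]
    show raagCount Γ a (raagAmalgT Γ a (Raag.of _ v)) = 1
    rw [raagAmalgT_of, raagCount_of]
    exact if_neg (link_ne Γ a v.1 v.2)
  have h1 : raagCount Γ a ((genA Γ a) ^ k) = Multiplicative.ofAdd k := by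
    rw [map_zpow, genA, raagCount_of, if_pos rfl, ← ofAdd_zsmul, smul_eq_mul, mul_one]
  have h2 : raagCount Γ a ((raagAmalg Γ a true) y) = 1 := by
    have := congrFun (congrArg (fun f => f.toFun) hcomp) y
    exact this
  rw [← hy, h2] at h1
  exact hk (by simpa using h1.symm)

/-- The comparison map from the RAAG to the amalgam. -/
def raagToPushout : Raag Γ →* PushoutI (raagAmalg Γ a) :=
  raagHom Γ
    (fun v => if h : v = a then PushoutI.of (φ := raagAmalg Γ a) true (genA Γ a)
      else PushoutI.of (φ := raagAmalg Γ a) false (Raag.of _ ⟨v, h⟩))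
    (by
      intro u v hadj
      have key : ∀ w (hw : Γ.Adj a w),
          PushoutI.of (φ := raagAmalg Γ a) false
              (Raag.of (Γ.induce {v | v ≠ a}) ⟨w, link_ne Γ a w hw⟩) =
            PushoutI.of (φ := raagAmalg Γ a) true
              (Raag.of (Γ.induce (starSet Γ a)) ⟨w, Or.inr hw⟩) := by
        intro w hw
        have h1 : (Raag.of (Γ.induce {v | v ≠ a}) ⟨w, link_ne Γ a w hw⟩) =
            raagAmalg Γ a false (Raag.of (Γ.induce (linkSet Γ a)) ⟨w, hw⟩) :=
          (raagAmalgF_of Γ a ⟨w, hw⟩).symm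
        have h2 : (Raag.of (Γ.induce (starSet Γ a)) ⟨w, Or.inr hw⟩) =
            raagAmalg Γ a true (Raag.of (Γ.induce (linkSet Γ a)) ⟨w, hw⟩) :=
          (raagAmalgT_of Γ a ⟨w, hw⟩).symm
        rw [h1, h2, PushoutI.of_apply_eq_base, PushoutI.of_apply_eq_base]
      beta_reduce
      by_cases hu : u = a <;> by_cases hv : v = a
      · exact absurd hadj (by rw [hu, hv]; exact Γ.loopless.irrefl a)
      · rw [dif_pos hu, dif_neg hv]
        rw [key v (hu ▸ hadj)]
        exact ((genA_central Γ a _).symm.map (PushoutI.of (φ := raagAmalg Γ a) true))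
      · rw [dif_neg hu, dif_pos hv]
        rw [key u (hv ▸ hadj.symm)]
        exact ((genA_central Γ a _).map (PushoutI.of (φ := raagAmalg Γ a) true))
      · rw [dif_neg hu, dif_neg hv]
        exact (Raag.commute_of_adj (Γ.induce {v | v ≠ a})
          (u := ⟨u, hu⟩) (v := ⟨v, hv⟩) hadj).map _)

/-- the inclusion of the complement factor back into the RAAG -/
def raagInclF : Raag (Γ.induce {v | v ≠ a}) →* Raag Γ :=
  raagHom _ (fun v => Raag.of Γ v.1) (fun u v h => Raag.commute_of_adj Γ (induce_adj' Γ h))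

/-- the inclusion of the star factor back into the RAAG -/
def raagInclT : Raag (Γ.induce (starSet Γ a)) →* Raag Γ :=
  raagHom _ (fun v => Raag.of Γ v.1) (fun u v h => Raag.commute_of_adj Γ (induce_adj' Γ h))

/-- the inclusion of the link RAAG back into the RAAG -/
def raagInclL : Raag (Γ.induce (linkSet Γ a)) →* Raag Γ :=
  raagHom _ (fun v => Raag.of Γ v.1) (fun u v h => Raag.commute_of_adj Γ (induce_adj' Γ h))

/-- The inverse comparison map. -/
def raagFromFac : ∀ i, raagFac Γ a i →* Raag Γ
  | false => raagInclF Γ a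
  | true => raagInclT Γ a

noncomputable def raagFromPushout : PushoutI (raagAmalg Γ a) →* Raag Γ :=
  PushoutI.lift (raagFromFac Γ a) (raagInclL Γ a)
    (by
      intro i
      cases i <;>
      · apply raagHom_ext
        intro v
        simp only [MonoidHom.coe_comp, Function.comp_apply]
        first
        | (show raagInclF Γ a (raagAmalgF Γ a (Raag.of _ v)) = raagInclL Γ a (Raag.of _ v)
           rw [raagAmalgF_of, raagInclF, raagHom_of, raagInclL, raagHom_of])
        | (show raagInclT Γ a (raagAmalgT Γ a (Raag.of _ v)) = raagInclL Γ a (Raag.of _ v)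
           rw [raagAmalgT_of, raagInclT, raagHom_of, raagInclL, raagHom_of]))

lemma raagToPushout_injective : Function.Injective (raagToPushout Γ a) := by
  refine comp_eq_id_injective (ρ := raagFromPushout Γ a) (raagHom_ext _ ?_)
  intro v
  simp only [MonoidHom.coe_comp, Function.comp_apply, MonoidHom.id_apply]
  rw [raagToPushout, raagHom_of]
  by_cases hv : v = a
  · rw [dif_pos hv, raagFromPushout]
    erw [PushoutI.lift_of]
    show raagInclT Γ a (genA Γ a) = Raag.of Γ v
    rw [genA, raagInclT, raagHom_of, hv]
  · rw [dif_neg hv, raagFromPushout]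
    erw [PushoutI.lift_of]
    show raagInclF Γ a (Raag.of _ ⟨v, hv⟩) = Raag.of Γ v
    rw [raagInclF, raagHom_of]

/-- KEY LEMMA: anything commuting with a nonzero power of a generator commutes with
the generator itself. -/
lemma commute_gen_of_commute_zpow (k : ℤ) (hk : k ≠ 0) (g : Raag Γ)
    (hg : Commute g ((Raag.of Γ a) ^ k)) : Commute g (Raag.of Γ a) := by
  have hΦa : raagToPushout Γ a (Raag.of Γ a) =
      PushoutI.of (φ := raagAmalg Γ a) true (genA Γ a) := by
    rw [raagToPushout, raagHom_of, dif_pos rfl]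
  have h2 : Commute (raagToPushout Γ a g)
      (PushoutI.of (φ := raagAmalg Γ a) true ((genA Γ a) ^ k)) := by
    have := hg.map (raagToPushout Γ a)
    rw [map_zpow, hΦa] at this
    erw [map_zpow]
    exact this
  have h3 := mem_range_of_commute (raagAmalg_injective Γ a)
    (genA_zpow_not_in_range Γ a k hk)
    (fun x => (genA_central Γ a x).zpow_right k)
    (raagToPushout Γ a g) h2
  obtain ⟨y, hy⟩ := h3
  have h4 : Commute (raagToPushout Γ a g) (raagToPushout Γ a (Raag.of Γ a)) := by
    rw [hΦa, ← hy]
    exact (genA_central Γ a y).map (PushoutI.of (φ := raagAmalg Γ a) true)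
  have h5 := h4.eq
  rw [← map_mul, ← map_mul] at h5
  exact raagToPushout_injective Γ a h5

lemma conj_commute_iff' {G : Type*} [Group G] (t x y : G) :
    Commute (t * x * t⁻¹) (t * y * t⁻¹) ↔ Commute x y := by
  constructor
  · intro h
    have := h.map (MulAut.conj t⁻¹)
    simpa [MulAut.conj_apply, mul_assoc] using this
  · intro h
    have := h.map (MulAut.conj t)
    simpa [MulAut.conj_apply, mul_assoc] using this

lemma commute_conj_iff {G : Type*} [Group G] (t x y : G) :
    Commute (t⁻¹ * x * t) y ↔ Commute x (t * y * t⁻¹) := by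
  conv_rhs => rw [show x = t * (t⁻¹ * x * t) * t⁻¹ by group]
  exact (conj_commute_iff' t _ _).symm

end RaagAux

/-- `[(a^k)^g, (b^m)^h] = 1` iff `[a^g, b^h] = 1`, for nonzero `k, m`. -/
theorem commute_pow_conj_iff {V : Type*} [Fintype V] (Γ : SimpleGraph V)
    (a b : V) (k m : ℤ) (hk : k ≠ 0) (hm : m ≠ 0) (g h : Raag Γ) :
    Commute (g⁻¹ * (Raag.of Γ a) ^ k * g) (h⁻¹ * (Raag.of Γ b) ^ m * h) ↔
      Commute (g⁻¹ * Raag.of Γ a * g) (h⁻¹ * Raag.of Γ b * h) := by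
  classical
  letI : DecidableRel Γ.Adj := fun _ _ => Classical.dec _
  constructor
  · intro H
    have h1 : Commute ((Raag.of Γ a) ^ k) (g * (h⁻¹ * (Raag.of Γ b) ^ m * h) * g⁻¹) :=
      (commute_conj_iff g _ _).mp H
    have h2 : Commute (g * (h⁻¹ * (Raag.of Γ b) ^ m * h) * g⁻¹) (Raag.of Γ a) :=
      commute_gen_of_commute_zpow Γ a k hk _ h1.symm
    have h3 : Commute (g⁻¹ * Raag.of Γ a * g) (h⁻¹ * (Raag.of Γ b) ^ m * h) :=
      (commute_conj_iff g _ _).mpr h2.symm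
    have h4 : Commute ((Raag.of Γ b) ^ m) (h * (g⁻¹ * Raag.of Γ a * g) * h⁻¹) :=
      (commute_conj_iff h _ _).mp h3.symm
    have h5 : Commute (h * (g⁻¹ * Raag.of Γ a * g) * h⁻¹) (Raag.of Γ b) :=
      commute_gen_of_commute_zpow Γ b m hm _ h4.symm
    have h6 : Commute (h⁻¹ * Raag.of Γ b * h) (g⁻¹ * Raag.of Γ a * g) :=
      (commute_conj_iff h _ _).mpr h5.symm
    exact h6.symm
  · intro H
    have h1 := H.zpow_zpow k m
    have e1 : (g⁻¹ * Raag.of Γ a * g) ^ k = g⁻¹ * (Raag.of Γ a) ^ k * g := by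
      have hmap := map_zpow (MulAut.conj g⁻¹) (Raag.of Γ a) k
      simp only [MulAut.conj_apply, inv_inv] at hmap
      exact hmap.symm
    have e2 : (h⁻¹ * Raag.of Γ b * h) ^ m = h⁻¹ * (Raag.of Γ b) ^ m * h := by
      have hmap := map_zpow (MulAut.conj h⁻¹) (Raag.of Γ b) m
      simp only [MulAut.conj_apply, inv_inv] at hmap
      exact hmap.symm
    rw [e1, e2] at h1
    exact h1
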